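/- For a forest F with bi-order traversal sequence and a node u of F, the subforest F[l(u), r(u)) equals the subtree rooted at u, where l(u) is the index of u's first occurrence and r(u) is one plus the index of its second occurrence. Moreover, F[l,r) contains a node u if and only if l ≤ l(u) and r(u) ≤ r. -/

import Mathlib

/-- Ordered rooted trees with node labels from `α`. -/
inductive Tree' (α : Type) : Type
  | node (label : α) (children : List (Tree' α))

/-- An ordered forest is an ordered list of trees. -/
abbrev Forest (α : Type) := List (Tree' α)

mutual
/-- Number of nodes of a tree. -/
def Tree'.size {α : Type} : Tree' α → ℕ
  | .node _ cs => 1 + Forest.size cs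
/-- Number of nodes of a forest. -/
def Forest.size {α : Type} : Forest α → ℕ
  | [] => 0
  | t :: ts => Tree'.size t + Forest.size ts
end

/-- A single edit operation on a forest: delete a node (promoting its children, in
order, to its parent) or relabel a node. -/
inductive EditStep {α : Type} : Forest α → Forest α → Prop
  | delete (pre : Forest α) (a : α) (cs post : Forest α) :
      EditStep (pre ++ Tree'.node a cs :: post) (pre ++ cs ++ post)
  | relabel (pre : Forest α) (a b : α) (cs post : Forest α) :
      EditStep (pre ++ Tree'.node a cs :: post) (pre ++ Tree'.node b cs :: post)
  | inside (pre : Forest α) (a : α) {cs cs' : Forest α} (post : Forest α) :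
      EditStep cs cs' →
      EditStep (pre ++ Tree'.node a cs :: post) (pre ++ Tree'.node a cs' :: post)

/-- `EditSteps n F G`: `G` is obtained from `F` by exactly `n` edit operations. -/
inductive EditSteps {α : Type} : ℕ → Forest α → Forest α → Prop
  | refl (F : Forest α) : EditSteps 0 F F
  | tail {n : ℕ} {F G H : Forest α} : EditSteps n F G → EditStep G H → EditSteps (n + 1) F H

/-- The (unweighted) tree edit distance: the minimum total number of relabelings
and deletions applied to `F1` and `F2` so that they become identical. -/
noncomputable def ed {α : Type} (F1 F2 : Forest α) : ℕ :=
  sInf {k | ∃ (k1 k2 : ℕ) (G : Forest α), k = k1 + k2 ∧ EditSteps k1 F1 G ∧ EditSteps k2 F2 G}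

/-- The similarity between two forests. -/
noncomputable def sim {α : Type} (F1 F2 : Forest α) : ℤ :=
  (Forest.size F1 : ℤ) + Forest.size F2 - ed F1 F2

mutual
/-- Helper for the subforest operation: the part of tree `t`, whose bi-order
traversal interval starts at position `p`, surviving the restriction to positions `[l, r)`.
A node is kept iff both of its occurrences lie at positions `l, …, r - 1`;
removed nodes have their children promoted. -/
def cutT {α : Type} (l r p : ℕ) : Tree' α → Forest α
  | .node a cs =>
      if l ≤ p ∧ p + 2 * Tree'.size (Tree'.node a cs) ≤ r then [Tree'.node a cs]
      else cutF l r (p + 1) cs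
/-- The part of forest `F`, whose bi-order traversal starts at position `p`,
surviving the restriction to positions `[l, r)`. -/
def cutF {α : Type} (l r p : ℕ) : Forest α → Forest α
  | [] => []
  | t :: ts => cutT l r p t ++ cutF l r (p + 2 * Tree'.size t) ts
end

/-- The subforest `F[l, r)` determined by the interval `[l, r)` of the (1-indexed)
bi-order traversal sequence of `F`. -/
def subforest {α : Type} (F : Forest α) (l r : ℕ) : Forest α := cutF l r 1 F

/-- `OccF F base p t`: the forest `F`, whose bi-order traversal starts at position `base`,
has a node with subtree `t` whose first occurrence is at position `p`. -/
inductive OccF {α : Type} : Forest α → ℕ → ℕ → Tree' α → Prop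
  | head (a : α) (cs ts : Forest α) (base : ℕ) :
      OccF (Tree'.node a cs :: ts) base base (Tree'.node a cs)
  | inChildren {cs : Forest α} {p : ℕ} {t : Tree' α} (a : α) (ts : Forest α) (base : ℕ) :
      OccF cs (base + 1) p t → OccF (Tree'.node a cs :: ts) base p t
  | inRest {ts : Forest α} {p : ℕ} {t : Tree' α} (t0 : Tree' α) (base : ℕ) :
      OccF ts (base + 2 * Tree'.size t0) p t → OccF (t0 :: ts) base p t

/-- The label of the root of a tree. -/
def Tree'.label {α : Type} : Tree' α → α
  | .node a _ => a

/-- A node occurrence `(p, t)` (first occurrence at position `p`, subtree `t`) is a strict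
ancestor of the occurrence `(q, s)`. -/
def Anc {α : Type} (u v : ℕ × Tree' α) : Prop :=
  u.1 < v.1 ∧ v.1 + 2 * Tree'.size v.2 ≤ u.1 + 2 * Tree'.size u.2

/-- The node occurrence `u` precedes the node occurrence `v`: `r(u) ≤ l(v)`. -/
def Prec {α : Type} (u v : ℕ × Tree' α) : Prop :=
  u.1 + 2 * Tree'.size u.2 ≤ v.1


section Aux

variable {α : Type}

theorem sizeT_pos (t : Tree' α) : 1 ≤ Tree'.size t := by
  cases t with
  | node a cs => rw [Tree'.size]; omega

mutual
theorem cutT_nil (l r p : ℕ) (t : Tree' α)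
    (h : r ≤ p ∨ p + 2 * Tree'.size t ≤ l) : cutT l r p t = [] := by
  cases t with
  | node a cs =>
    rw [Tree'.size] at h
    rw [cutT, if_neg, cutF_nil]
    · rcases h with h | h
      · exact Or.inl (by omega)
      · exact Or.inr (by omega)
    · rintro ⟨h1, h2⟩
      have := sizeT_pos (Tree'.node a cs)
      rw [Tree'.size] at h2
      omega
theorem cutF_nil (l r p : ℕ) (F : Forest α)
    (h : r ≤ p ∨ p + 2 * Forest.size F ≤ l) : cutF l r p F = [] := by
  cases F with
  | nil => rw [cutF]
  | cons t ts =>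
    rw [Forest.size] at h
    rw [cutF, cutT_nil, cutF_nil, List.nil_append]
    · rcases h with h | h
      · exact Or.inl (by omega)
      · exact Or.inr (by omega)
    · rcases h with h | h
      · exact Or.inl (by omega)
      · exact Or.inr (by omega)
end

mutual
/-- The list of node occurrences of a tree (first-occurrence position, subtree). -/
def occT (base : ℕ) : Tree' α → List (ℕ × Tree' α)
  | .node a cs => (base, .node a cs) :: occF' (base + 1) cs
/-- The list of node occurrences of a forest. -/
def occF' (base : ℕ) : Forest α → List (ℕ × Tree' α)
  | [] => []
  | t :: ts => occT base t ++ occF' (base + 2 * Tree'.size t) ts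
end

mutual
theorem occT_bound (base : ℕ) (t : Tree' α) (pt : ℕ × Tree' α)
    (h : pt ∈ occT base t) :
    base ≤ pt.1 ∧ pt.1 + 2 * Tree'.size pt.2 ≤ base + 2 * Tree'.size t := by
  cases t with
  | node a cs =>
    rw [occT] at h
    rw [Tree'.size]
    rcases List.mem_cons.mp h with h | h
    · subst h; rw [Tree'.size]; omega
    · have := occF'_bound (base + 1) cs pt h
      omega
theorem occF'_bound (base : ℕ) (F : Forest α) (pt : ℕ × Tree' α)
    (h : pt ∈ occF' base F) :
    base ≤ pt.1 ∧ pt.1 + 2 * Tree'.size pt.2 ≤ base + 2 * Forest.size F := by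
  cases F with
  | nil => rw [occF'] at h; simp at h
  | cons t ts =>
    rw [occF'] at h
    rw [Forest.size]
    rcases List.mem_append.mp h with h | h
    · have := occT_bound base t pt h
      omega
    · have := occF'_bound (base + 2 * Tree'.size t) ts pt h
      omega
end

mutual
theorem occT_length (base : ℕ) (t : Tree' α) :
    (occT base t).length = Tree'.size t := by
  cases t with
  | node a cs =>
    rw [occT, Tree'.size, List.length_cons, occF'_length]
    omega
theorem occF'_length (base : ℕ) (F : Forest α) :
    (occF' base F).length = Forest.size F := by
  cases F with
  | nil => rw [occF', Forest.size]; rfl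
  | cons t ts =>
    rw [occF', Forest.size, List.length_append, occT_length, occF'_length]
end

mutual
theorem occT_nodup (base : ℕ) (t : Tree' α) : (occT base t).Nodup := by
  cases t with
  | node a cs =>
    rw [occT, List.nodup_cons]
    refine ⟨fun h => ?_, occF'_nodup (base + 1) cs⟩
    have := occF'_bound (base + 1) cs _ h
    simp at this
theorem occF'_nodup (base : ℕ) (F : Forest α) : (occF' base F).Nodup := by
  cases F with
  | nil => rw [occF']; exact List.nodup_nil
  | cons t ts =>
    rw [occF']
    refine (occT_nodup base t).append (occF'_nodup _ ts) ?_
    intro pt h1 h2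
    have b1 := occT_bound base t pt h1
    have b2 := occF'_bound (base + 2 * Tree'.size t) ts pt h2
    have := sizeT_pos pt.2
    omega
end

mutual
theorem occT_occ (base : ℕ) (t0 : Tree' α) (pt : ℕ × Tree' α)
    (h : pt ∈ occT base t0) (ts : Forest α) :
    OccF (t0 :: ts) base pt.1 pt.2 := by
  cases t0 with
  | node a cs =>
    rw [occT] at h
    rcases List.mem_cons.mp h with h | h
    · rw [h]; exact OccF.head a cs ts base
    · exact OccF.inChildren a ts base (occF'_occ (base + 1) cs pt h)
theorem occF'_occ (base : ℕ) (F : Forest α) (pt : ℕ × Tree' α)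
    (h : pt ∈ occF' base F) : OccF F base pt.1 pt.2 := by
  cases F with
  | nil => rw [occF'] at h; simp at h
  | cons t ts =>
    rw [occF'] at h
    rcases List.mem_append.mp h with h | h
    · exact occT_occ base t pt h ts
    · exact OccF.inRest t base (occF'_occ _ ts pt h)
end

theorem occ_mem {F : Forest α} {base p : ℕ} {t : Tree' α}
    (h : OccF F base p t) : (p, t) ∈ occF' base F := by
  induction h with
  | head a cs ts base => rw [occF', occT]; exact List.mem_append_left _ List.mem_cons_self
  | inChildren a ts base _ ih =>
      rw [occF', occT]
      exact List.mem_append_left _ (List.mem_cons_of_mem _ ih)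
  | inRest t0 base _ ih =>
      rw [occF']
      exact List.mem_append_right _ ih

theorem occ_iff_mem {F : Forest α} {base : ℕ} {pt : ℕ × Tree' α} :
    OccF F base pt.1 pt.2 ↔ pt ∈ occF' base F :=
  ⟨occ_mem, occF'_occ base F pt⟩

theorem occ_bound {F : Forest α} {base p : ℕ} {t : Tree' α} (h : OccF F base p t) :
    base ≤ p ∧ p + 2 * Tree'.size t ≤ base + 2 * Forest.size F :=
  occF'_bound base F (p, t) (occ_mem h)

/-- Part 1. -/
theorem cutF_occ {F : Forest α} {base p : ℕ} {t : Tree' α} (h : OccF F base p t) :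
    cutF p (p + 2 * Tree'.size t) base F = [t] := by
  induction h with
  | head a cs ts base =>
      rw [cutF, cutT, if_pos ⟨le_refl _, le_refl _⟩,
        cutF_nil _ _ _ _ (Or.inl (le_refl _)), List.append_nil]
  | inChildren a ts base h ih =>
      have hb := occ_bound h
      rw [cutF, cutT, if_neg, ih, cutF_nil, List.append_nil]
      · rw [Tree'.size]; omega
      · rintro ⟨h1, h2⟩; omega
  | inRest t0 base h ih =>
      have hb := occ_bound h
      rw [cutF, cutT_nil _ _ _ _ (Or.inr (by omega)), ih, List.nil_append]

theorem size_append (F G : Forest α) :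
    Forest.size (F ++ G) = Forest.size F + Forest.size G := by
  induction F with
  | nil => rw [List.nil_append, Forest.size, Nat.zero_add]
  | cons t ts ih => rw [List.cons_append, Forest.size, Forest.size, ih]; omega

theorem filter_occ_full (l r base : ℕ) (F : Forest α) (hl : l ≤ base)
    (hr : base + 2 * Forest.size F ≤ r) :
    (occF' base F).filter
      (fun pt => decide (l ≤ pt.1 ∧ pt.1 + 2 * Tree'.size pt.2 ≤ r)) = occF' base F := by
  apply List.filter_eq_self.mpr
  intro pt hpt
  have := occF'_bound base F pt hpt
  simp only [decide_eq_true_eq]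
  omega

mutual
theorem cutT_count (l r p : ℕ) (t : Tree' α) :
    Forest.size (cutT l r p t) =
      ((occT p t).filter
        (fun pt => decide (l ≤ pt.1 ∧ pt.1 + 2 * Tree'.size pt.2 ≤ r))).length := by
  cases t with
  | node a cs =>
    rw [cutT, occT]
    by_cases h : l ≤ p ∧ p + 2 * Tree'.size (Tree'.node a cs) ≤ r
    · rw [if_pos h, List.filter_cons_of_pos (by simpa using h),
        filter_occ_full l r (p + 1) cs (by omega) (by rw [Tree'.size] at h; omega),
        List.length_cons, occF'_length, Forest.size, Tree'.size, Forest.size]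
      omega
    · rw [if_neg h, List.filter_cons_of_neg (by simpa using h), cutF_count]
theorem cutF_count (l r p : ℕ) (F : Forest α) :
    Forest.size (cutF l r p F) =
      ((occF' p F).filter
        (fun pt => decide (l ≤ pt.1 ∧ pt.1 + 2 * Tree'.size pt.2 ≤ r))).length := by
  cases F with
  | nil => rw [cutF, occF', Forest.size]; rfl
  | cons t ts =>
    rw [cutF, occF', size_append, List.filter_append, List.length_append,
      cutT_count, cutF_count]
end

end Aux

/-- For a node occurrence `(p, t)` of `F` (first occurrence at position `p` of the
bi-order traversal, so `l(u) = p` and `r(u) = p + 2|sub(u)|`), the subforest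
`F[l(u), r(u))` equals the subtree rooted at `u`; moreover `F[l, r)` contains exactly
those nodes `u` of `F` with `l ≤ l(u)` and `r(u) ≤ r`. -/
theorem subforest_of_node_interval {α : Type} (F : Forest α) :
    (∀ (p : ℕ) (t : Tree' α), OccF F 1 p t →
      subforest F p (p + 2 * Tree'.size t) = [t]) ∧
    (∀ l r : ℕ, Forest.size (subforest F l r) =
      Nat.card {pt : ℕ × Tree' α //
        OccF F 1 pt.1 pt.2 ∧ l ≤ pt.1 ∧ pt.1 + 2 * Tree'.size pt.2 ≤ r}) := by
  classical
  constructor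
  · intro p t h
    exact cutF_occ h
  · intro l r
    rw [subforest, cutF_count]
    have e : {pt : ℕ × Tree' α //
        OccF F 1 pt.1 pt.2 ∧ l ≤ pt.1 ∧ pt.1 + 2 * Tree'.size pt.2 ≤ r} ≃
        {pt : ℕ × Tree' α // pt ∈ ((occF' 1 F).filter
          (fun pt => decide (l ≤ pt.1 ∧ pt.1 + 2 * Tree'.size pt.2 ≤ r))).toFinset} := by
      apply Equiv.subtypeEquivRight
      intro pt
      constructor
      · rintro ⟨h1, h2⟩
        exact List.mem_toFinset.mpr (List.mem_filter.mpr
          ⟨occ_iff_mem.mp h1, decide_eq_true h2⟩)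
      · intro h
        obtain ⟨h1, h2⟩ := List.mem_filter.mp (List.mem_toFinset.mp h)
        exact ⟨occ_iff_mem.mpr h1, of_decide_eq_true h2⟩
    rw [Nat.card_congr e, Nat.card_eq_finsetCard,
      List.toFinset_card_of_nodup ((occF'_nodup 1 F).filter _)]
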